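/- Let S ≥ 1, let r_1 > r_2 > … > r_S > 0 be real numbers and m_1, …, m_S positive integers, and define Ξ(ξ,λ) = ∏_{j=1}^S (|ξ|² + λ^{2/r_j})^{m_j} for ξ ∈ ℝⁿ, λ ≥ 0. For s ∈ {1,…,S} set d_s = 2 Σ_{j=1}^s m_j + 2 Σ_{j=s+1}^S (r_s/r_j) m_j. Then for every fixed ξ ∈ ℝⁿ and λ ≥ 0: lim_{t→+∞} t^{−d_s} Ξ(tξ, t^{r_s}λ) = |ξ|^{2(m_1+…+m_{s−1})} (|ξ|² + λ^{2/r_s})^{m_s} λ^{2 Σ_{j=s+1}^S m_j/r_j} (with empty products and empty sums interpreted as 1 and 0 respectively). -/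

import Mathlib

open MeasureTheory Finset Filter

noncomputable section

/-- The weight function `Ξ(ξ,λ) = ∏_s (|ξ|² + λ^{2/r_s})^{m_s}` of a Newton polygon. -/
def XiWeight {n S : ℕ} (r : Fin S → ℝ) (m : Fin S → ℕ)
    (ξ : EuclideanSpace ℝ (Fin n)) (lam : ℝ) : ℝ :=
  ∏ s, (‖ξ‖ ^ 2 + lam ^ (2 / r s)) ^ m s

private lemma rpow_finset_sum' {ι : Type*} {t : ℝ} (ht : 0 < t) (u : Finset ι) (c : ι → ℝ) :
    t ^ (∑ j ∈ u, c j) = ∏ j ∈ u, t ^ c j := by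
  classical
  induction u using Finset.cons_induction with
  | empty => simp
  | cons a u ha ih => rw [Finset.sum_cons, Finset.prod_cons, Real.rpow_add ht, ih]

private lemma prod_rpow_sum' {ι : Type*} {x : ℝ} (hx : 0 ≤ x) (u : Finset ι) (c : ι → ℝ)
    (hc : ∀ j ∈ u, 0 < c j) :
    ∏ j ∈ u, x ^ c j = x ^ (∑ j ∈ u, c j) := by
  rcases hx.eq_or_lt with h0 | hx
  · rcases u.eq_empty_or_nonempty with rfl | ⟨j, hj⟩
    · simp
    · rw [Finset.prod_eq_zero hj (by rw [← h0]; exact Real.zero_rpow (hc j hj).ne'),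
        ← h0, Real.zero_rpow (Finset.sum_pos hc ⟨j, hj⟩).ne']
  · exact (rpow_finset_sum' hx u c).symm

private lemma tendsto_rpow_nonpos' {e : ℝ} (he : e ≤ 0) :
    Tendsto (fun t : ℝ => t ^ e) atTop (nhds (if e = 0 then 1 else 0)) := by
  rcases he.eq_or_lt with h | h
  · rw [if_pos h, h]
    simpa using (tendsto_const_nhds : Tendsto (fun _ : ℝ => (1:ℝ)) atTop (nhds 1))
  · rw [if_neg h.ne]
    simpa using tendsto_rpow_neg_atTop (by linarith : (0:ℝ) < -e)

/-- quasi-homogeneity of the weight function: with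
`d_s = 2 Σ_{j≤s} m_j + 2 Σ_{j>s} (r_s/r_j) m_j` one has
`t^{−d_s} Ξ(tξ, t^{r_s}λ) → |ξ|^{2(m₁+…+m_{s−1})} (|ξ|²+λ^{2/r_s})^{m_s} λ^{2Σ_{j>s} m_j/r_j}`
as `t → +∞`. -/
theorem statement11 (n S : ℕ) (hS : 0 < S) (r : Fin S → ℝ) (m : Fin S → ℕ)
    (hm : ∀ s, 0 < m s) (hrpos : ∀ s, 0 < r s) (hr : StrictAnti r)
    (s : Fin S) (ξ : EuclideanSpace ℝ (Fin n)) (lam : ℝ) (hlam : 0 ≤ lam) :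
    Tendsto
      (fun t : ℝ =>
        t ^ (-(2 * (∑ j ∈ Finset.Iic s, (m j : ℝ))
              + 2 * ∑ j ∈ Finset.Ioi s, (r s / r j) * (m j : ℝ)))
          * XiWeight r m (t • ξ) (t ^ r s * lam))
      atTop
      (nhds (‖ξ‖ ^ (2 * ∑ j ∈ Finset.Iio s, m j)
        * (‖ξ‖ ^ 2 + lam ^ (2 / r s)) ^ m s
        * lam ^ (2 * ∑ j ∈ Finset.Ioi s, (m j : ℝ) / r j))) := by
  classical
  set a : Fin S → ℝ := fun j => 2 * r s / r j with ha
  set b : Fin S → ℝ := fun j => max 2 (a j) with hb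
  -- basic facts about a and b
  have ha_le : ∀ j, j ≤ s → a j ≤ 2 := by
    intro j hj
    rw [ha]
    rw [div_le_iff₀ (hrpos j)]
    nlinarith [hr.antitone hj]
  have ha_ge : ∀ j, s ≤ j → 2 ≤ a j := by
    intro j hj
    rw [ha]
    rw [le_div_iff₀ (hrpos j)]
    nlinarith [hr.antitone hj]
  have hb_le : ∀ j, j ≤ s → b j = 2 := fun j hj => max_eq_left (ha_le j hj)
  have hb_ge : ∀ j, s ≤ j → b j = a j := fun j hj => max_eq_right (ha_ge j hj)
  have hb2 : ∀ j, 2 ≤ b j := fun j => le_max_left _ _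
  have hba : ∀ j, a j ≤ b j := fun j => le_max_right _ _
  -- the limit value of each factor
  set L : Fin S → ℝ := fun j =>
    ((if j ≤ s then (1:ℝ) else 0) * ‖ξ‖ ^ 2
      + (if s ≤ j then (1:ℝ) else 0) * lam ^ (2 / r j)) ^ m j with hL
  have huniv : (Finset.univ : Finset (Fin S)) = Finset.Iic s ∪ Finset.Ioi s := by
    ext j
    simp only [Finset.mem_univ, Finset.mem_union, Finset.mem_Iic, Finset.mem_Ioi, true_iff]
    exact le_or_gt j s
  have hdisj : Disjoint (Finset.Iic s) (Finset.Ioi s) := by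
    rw [Finset.disjoint_left]
    intro j hj1 hj2
    exact absurd (Finset.mem_Iic.mp hj1) (not_le.mpr (Finset.mem_Ioi.mp hj2))
  -- Step B : limits of the normalized factors
  have hBj : ∀ j : Fin S,
      Tendsto (fun t : ℝ =>
        (t ^ (2 - b j) * ‖ξ‖ ^ 2 + t ^ (a j - b j) * lam ^ (2 / r j)) ^ m j)
        atTop (nhds (L j)) := by
    intro j
    have h1 : (2 - b j = 0) ↔ (j ≤ s) := by
      constructor
      · intro h
        have hbj : max 2 (a j) = 2 := by
          have : b j = 2 := by linarith
          simpa [hb] using this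
        have haj : a j ≤ 2 := max_eq_left_iff.mp hbj
        rw [ha] at haj
        rw [div_le_iff₀ (hrpos j)] at haj
        have hrsj : r s ≤ r j := by linarith
        exact hr.le_iff_ge.mp hrsj
      · intro h; rw [hb_le j h]; ring
    have h2 : (a j - b j = 0) ↔ (s ≤ j) := by
      constructor
      · intro h
        have hbj : max 2 (a j) = a j := by
          have : b j = a j := by linarith
          simpa [hb] using this
        have haj : 2 ≤ a j := max_eq_right_iff.mp hbj
        rw [ha] at haj
        rw [le_div_iff₀ (hrpos j)] at haj
        have hrsj : r j ≤ r s := by linarith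
        exact hr.le_iff_ge.mp hrsj
      · intro h; rw [hb_ge j h]; ring
    have t1 := tendsto_rpow_nonpos' (by linarith [hb2 j] : 2 - b j ≤ 0)
    have t2 := tendsto_rpow_nonpos' (by linarith [hba j] : a j - b j ≤ 0)
    have e1 : (if 2 - b j = 0 then (1:ℝ) else 0) = (if j ≤ s then (1:ℝ) else 0) :=
      if_congr h1 rfl rfl
    have e2 : (if a j - b j = 0 then (1:ℝ) else 0) = (if s ≤ j then (1:ℝ) else 0) :=
      if_congr h2 rfl rfl
    rw [e1] at t1
    rw [e2] at t2
    exact ((t1.mul_const _).add (t2.mul_const _)).pow (m j)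
  have key := tendsto_finset_prod (Finset.univ : Finset (Fin S))
    (fun j (_ : j ∈ Finset.univ) => hBj j)
  -- Step A : eventual equality
  have heq : (fun t : ℝ =>
        t ^ (-(2 * (∑ j ∈ Finset.Iic s, (m j : ℝ))
              + 2 * ∑ j ∈ Finset.Ioi s, (r s / r j) * (m j : ℝ)))
          * XiWeight r m (t • ξ) (t ^ r s * lam))
      =ᶠ[atTop] (fun t : ℝ => ∏ j,
        (t ^ (2 - b j) * ‖ξ‖ ^ 2 + t ^ (a j - b j) * lam ^ (2 / r j)) ^ m j) := by
    filter_upwards [eventually_gt_atTop (0:ℝ)] with t ht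
    have hnorm : ‖t • ξ‖ ^ 2 = t ^ (2:ℕ) * ‖ξ‖ ^ 2 := by
      rw [norm_smul, Real.norm_eq_abs, abs_of_pos ht, mul_pow]
    have hfac : ∀ j : Fin S, (t ^ r s * lam) ^ (2 / r j) = t ^ a j * lam ^ (2 / r j) := by
      intro j
      rw [Real.mul_rpow (Real.rpow_nonneg ht.le _) hlam, ← Real.rpow_mul ht.le]
      congr 1
      rw [ha]; ring
    have hXi : XiWeight r m (t • ξ) (t ^ r s * lam)
        = ∏ j, (t ^ (2:ℕ) * ‖ξ‖ ^ 2 + t ^ a j * lam ^ (2 / r j)) ^ m j := by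
      unfold XiWeight
      refine Finset.prod_congr rfl fun j _ => ?_
      rw [hnorm, hfac]
    have hd : -(2 * (∑ j ∈ Finset.Iic s, (m j : ℝ))
              + 2 * ∑ j ∈ Finset.Ioi s, (r s / r j) * (m j : ℝ))
        = ∑ j, -(b j * (m j : ℝ)) := by
      have hd1 : ∑ j ∈ Finset.Iic s, -(b j * (m j : ℝ))
          = -(2 * ∑ j ∈ Finset.Iic s, (m j : ℝ)) := by
        have := Finset.sum_congr rfl (fun j hj => by
          rw [hb_le j (Finset.mem_Iic.mp hj)] :
          ∀ j ∈ Finset.Iic s, -(b j * (m j : ℝ)) = -(2 * (m j : ℝ)))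
        rw [this]
        rw [Finset.sum_neg_distrib, ← Finset.mul_sum]
      have hd2 : ∑ j ∈ Finset.Ioi s, -(b j * (m j : ℝ))
          = -(2 * ∑ j ∈ Finset.Ioi s, (r s / r j) * (m j : ℝ)) := by
        have := Finset.sum_congr rfl (fun j hj => by
          rw [hb_ge j (Finset.mem_Ioi.mp hj).le, ha]; ring :
          ∀ j ∈ Finset.Ioi s, -(b j * (m j : ℝ)) = -(2 * ((r s / r j) * (m j : ℝ))))
        rw [this]
        rw [Finset.sum_neg_distrib, ← Finset.mul_sum]
      rw [huniv, Finset.sum_union hdisj, hd1, hd2]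
      ring
    rw [hXi, hd, rpow_finset_sum' ht, ← Finset.prod_mul_distrib]
    refine Finset.prod_congr rfl fun j _ => ?_
    have e1 : t ^ (-(b j * (m j : ℝ))) = (t ^ (-(b j))) ^ m j := by
      rw [show -(b j * (m j:ℝ)) = (-(b j)) * (m j:ℝ) by ring, Real.rpow_mul ht.le,
        Real.rpow_natCast]
    rw [e1, ← mul_pow]
    congr 1
    rw [mul_add, ← mul_assoc, ← mul_assoc]
    congr 2
    · rw [← Real.rpow_natCast t 2, ← Real.rpow_add ht]
      congr 1
      push_cast; ring
    · rw [← Real.rpow_add ht]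
      congr 1
      ring
  -- Step C : the product of limits is the stated limit
  have hC : ∏ j, L j = ‖ξ‖ ^ (2 * ∑ j ∈ Finset.Iio s, m j)
        * (‖ξ‖ ^ 2 + lam ^ (2 / r s)) ^ m s
        * lam ^ (2 * ∑ j ∈ Finset.Ioi s, (m j : ℝ) / r j) := by
    have hIic : ∏ j ∈ Finset.Iic s, L j
        = (∏ j ∈ Finset.Iio s, L j) * L s := by
      rw [← Finset.Iic_erase s, Finset.prod_erase_mul _ _ (Finset.mem_Iic.mpr le_rfl)]
    have hIio : ∏ j ∈ Finset.Iio s, L j = ‖ξ‖ ^ (2 * ∑ j ∈ Finset.Iio s, m j) := by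
      have hc : ∀ j ∈ Finset.Iio s, L j = ‖ξ‖ ^ (m j * 2) := by
        intro j hj
        have hjs : j < s := Finset.mem_Iio.mp hj
        rw [hL]
        simp only [if_pos hjs.le, if_neg (not_le.mpr hjs), one_mul, zero_mul, add_zero]
        rw [← pow_mul, mul_comm 2 (m j)]
      rw [Finset.prod_congr rfl hc, Finset.prod_pow_eq_pow_sum, ← Finset.sum_mul, mul_comm]
    have hLs : L s = (‖ξ‖ ^ 2 + lam ^ (2 / r s)) ^ m s := by
      rw [hL]; simp
    have hIoi : ∏ j ∈ Finset.Ioi s, L j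
        = lam ^ (2 * ∑ j ∈ Finset.Ioi s, (m j : ℝ) / r j) := by
      have hc : ∀ j ∈ Finset.Ioi s, L j = lam ^ (2 / r j * (m j : ℝ)) := by
        intro j hj
        have hjs : s < j := Finset.mem_Ioi.mp hj
        rw [hL]
        simp only [if_neg (not_le.mpr hjs), if_pos hjs.le, one_mul, zero_mul, zero_add]
        rw [← Real.rpow_natCast (lam ^ (2 / r j)) (m j), ← Real.rpow_mul hlam]
      rw [Finset.prod_congr rfl hc,
        prod_rpow_sum' hlam _ _ (fun j _ =>
          mul_pos (div_pos two_pos (hrpos j)) (by exact_mod_cast hm j))]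
      congr 1
      rw [Finset.mul_sum]
      exact Finset.sum_congr rfl fun j _ => by ring
    rw [huniv, Finset.prod_union hdisj, hIic, hIio, hLs, hIoi]
  rw [← hC]
  exact key.congr' heq.symm

end
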